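/- arXiv:1607.01121 — 4 statements merged into one kernel-verified Lean document; each statement's English description precedes it below -/
import Mathlib

section
/- Let $m \ge 2n$ be natural numbers, and let $A, C \in \mathbb{C}^{m\times n}$ and $B, D \in \mathbb{C}^{n\times m}$. Then for every $\lambda \in \mathbb{C}$, $\det(\lambda I_m - AB - CD) = \lambda^{m-2n}\,\det\begin{bmatrix} \lambda I_n - BA & BC \\ DA & \lambda I_n - DC \end{bmatrix}$. -/
open Matrix

/-- Negating both off-diagonal blocks doesn't change the determinant. -/
lemma det_fromBlocks_neg_offdiag {n : ℕ} (X U V Y : Matrix (Fin n) (Fin n) ℂ) :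
    Matrix.det (Matrix.fromBlocks X (-U) (-V) Y) = Matrix.det (Matrix.fromBlocks X U V Y) := by
  set J : Matrix (Fin n ⊕ Fin n) (Fin n ⊕ Fin n) ℂ :=
    Matrix.fromBlocks 1 0 0 (-1) with hJdef
  have hconj : Matrix.fromBlocks X U V Y = J * Matrix.fromBlocks X (-U) (-V) Y * J := by
    simp [hJdef, Matrix.fromBlocks_multiply]
  have hJ : Matrix.det J * Matrix.det J = 1 := by
    rw [← Matrix.det_mul]
    simp [hJdef, Matrix.fromBlocks_multiply, ← Matrix.fromBlocks_one]
  rw [hconj, Matrix.det_mul, Matrix.det_mul]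
  linear_combination -Matrix.det (Matrix.fromBlocks X (-U) (-V) Y) * hJ

/-- Generalized Sylvester determinant identity for rectangular matrices. -/
lemma aux_sylvester (m : ℕ) (ι : Type) [Fintype ι] [DecidableEq ι]
    (h : Fintype.card ι ≤ m) (P : Matrix (Fin m) ι ℂ) (Q : Matrix ι (Fin m) ℂ) (lam : ℂ) :
    Matrix.det (lam • (1 : Matrix (Fin m) (Fin m) ℂ) - P * Q) =
      lam ^ (m - Fintype.card ι) *
        Matrix.det (lam • (1 : Matrix ι ι ℂ) - Q * P) := by
  by_cases hl : lam = 0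
  · subst hl
    simp only [zero_smul, zero_sub]
    rcases eq_or_lt_of_le h with hkm | hkm
    · -- card ι = m : det (P*Q) = det (Q*P)
      subst hkm
      have e' : ι ≃ Fin (Fintype.card ι) := Fintype.equivFinOfCardEq rfl
      have hPQ : Matrix.det (P * Q) = Matrix.det (Q * P) := by
        have h1 : P * Q =
            (P.submatrix id ⇑e'.symm) * (Q.submatrix ⇑e'.symm id) := by
          rw [Matrix.submatrix_mul_equiv P Q id e'.symm id]
          simp
        have h2 : (Q.submatrix ⇑e'.symm id) * (P.submatrix id ⇑e'.symm) =
            (Q * P).submatrix ⇑e'.symm ⇑e'.symm := by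
          have := Matrix.submatrix_mul_equiv Q P (⇑e'.symm)
            (Equiv.refl (Fin (Fintype.card ι))) (⇑e'.symm)
          rw [Equiv.coe_refl] at this
          exact this
        rw [h1, Matrix.det_mul, mul_comm, ← Matrix.det_mul, h2,
          Matrix.det_submatrix_equiv_self]
      rw [Matrix.det_neg, Matrix.det_neg, hPQ]
      simp
    · -- k < m : both sides vanish
      have h0 : Matrix.det (P * Q) = 0 := by
        by_contra hdet
        have hunit : IsUnit (P * Q) :=
          (Matrix.isUnit_iff_isUnit_det _).mpr (isUnit_iff_ne_zero.mpr hdet)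
        have hrank : (P * Q).rank = m := by
          rw [Matrix.rank_of_isUnit _ hunit, Fintype.card_fin]
        have hle : (P * Q).rank ≤ Fintype.card ι := le_trans (Matrix.rank_mul_le_left P Q)
          (le_trans (Matrix.rank_le_card_width P) (by simp))
        omega
      rw [Matrix.det_neg, h0, mul_zero, zero_pow (by omega), zero_mul]
  · -- lam ≠ 0
    have h1 : lam • (1 : Matrix (Fin m) (Fin m) ℂ) - P * Q
        = lam • ((1 : Matrix (Fin m) (Fin m) ℂ) - P * (lam⁻¹ • Q)) := by
      rw [smul_sub, Matrix.mul_smul, smul_smul, mul_inv_cancel₀ hl, one_smul]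
    have h2 : lam • (1 : Matrix ι ι ℂ) - Q * P
        = lam • ((1 : Matrix ι ι ℂ) - (lam⁻¹ • Q) * P) := by
      rw [smul_sub, Matrix.smul_mul, smul_smul, mul_inv_cancel₀ hl, one_smul]
    rw [h1, h2, Matrix.det_smul, Matrix.det_smul,
      Matrix.det_one_sub_mul_comm, Fintype.card_fin]
    have hp : lam ^ (m - Fintype.card ι) * lam ^ (Fintype.card ι) = lam ^ m := by
      rw [← pow_add]; congr 1; omega
    rw [← hp]; ring

/-- For `m ≥ 2n`, matrices `A, C : ℂ^{m×n}` and `B, D : ℂ^{n×m}`, and any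
`λ ∈ ℂ`, one has
`det (λ I_m - A B - C D) = λ^(m - 2n) * det [[λ I_n - B A, B C], [D A, λ I_n - D C]]`. -/
theorem det_smul_id_sub_mul_sub_mul_eq_pow_mul_det_fromBlocks
    (m n : ℕ) (hmn : 2 * n ≤ m)
    (A C : Matrix (Fin m) (Fin n) ℂ) (B D : Matrix (Fin n) (Fin m) ℂ) (lam : ℂ) :
    Matrix.det (lam • (1 : Matrix (Fin m) (Fin m) ℂ) - A * B - C * D) =
      lam ^ (m - 2 * n) *
        Matrix.det
          (Matrix.fromBlocks
            (lam • (1 : Matrix (Fin n) (Fin n) ℂ) - B * A) (B * C)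
            (D * A) (lam • (1 : Matrix (Fin n) (Fin n) ℂ) - D * C)) := by
  have hcard : Fintype.card (Fin n ⊕ Fin n) = 2 * n := by simp; ring
  have key := aux_sylvester m (Fin n ⊕ Fin n) (by rw [hcard]; exact hmn)
    (Matrix.fromCols A C) (Matrix.fromRows B D) lam
  rw [Matrix.fromCols_mul_fromRows, Matrix.fromRows_mul_fromCols, hcard] at key
  have hsub : lam • (1 : Matrix (Fin m) (Fin m) ℂ) - A * B - C * D
      = lam • (1 : Matrix (Fin m) (Fin m) ℂ) - (A * B + C * D) := by
    rw [sub_sub]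
  rw [hsub, key]
  congr 1
  have hblock : lam • (1 : Matrix (Fin n ⊕ Fin n) (Fin n ⊕ Fin n) ℂ)
        - Matrix.fromBlocks (B * A) (B * C) (D * A) (D * C)
      = Matrix.fromBlocks (lam • (1 : Matrix (Fin n) (Fin n) ℂ) - B * A) (-(B * C))
          (-(D * A)) (lam • (1 : Matrix (Fin n) (Fin n) ℂ) - D * C) := by
    ext (i | i) (j | j) <;> simp [Matrix.one_apply]
  rw [hblock, det_fromBlocks_neg_offdiag]
end

section
/- Let $x \in \mathbb{C}^n$ and set $a = \begin{bmatrix} x \\ \bar{x} \end{bmatrix} \in \mathbb{C}^{2n}$, $b = i\begin{bmatrix} x \\ -\bar{x} \end{bmatrix} \in \mathbb{C}^{2n}$, and $M = \|x\|^2 I_{2n} + \tfrac{3}{2} a a^* - \tfrac{1}{2} b b^* \in \mathbb{C}^{2n\times 2n}$. Then the characteristic polynomial of $M$ satisfies $\det(\lambda I_{2n} - M) = (\lambda - \|x\|^2)^{2n-2}\,\lambda\,(\lambda - 4\|x\|^2)$ for all $\lambda$; in particular the eigenvalues of $M$ are $4\|x\|^2$, $\|x\|^2$ (with multiplicity $2n-2$),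 and $0$, and $M$ is Hermitian positive semidefinite. -/
open Matrix
open scoped ComplexOrder

lemma aux_vecMulVec_smul_left {m : Type*} (α : ℂ) (u v : m → ℂ) :
    Matrix.vecMulVec (α • u) v = α • Matrix.vecMulVec u v := by
  ext i j; simp [Matrix.vecMulVec_apply, mul_assoc]

lemma aux_vecMulVec_mul {m : Type*} [Fintype m] (u v w z : m → ℂ) :
    Matrix.vecMulVec u v * Matrix.vecMulVec w z = (v ⬝ᵥ w) • Matrix.vecMulVec u z := by
  ext i j
  simp only [Matrix.mul_apply, Matrix.vecMulVec_apply, Matrix.smul_apply, dotProduct,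
    smul_eq_mul, Finset.sum_mul]
  exact Finset.sum_congr rfl fun k _ => by ring

lemma aux_vecMulVec_mulVec {m : Type*} [Fintype m] (u v y : m → ℂ) :
    Matrix.vecMulVec u v *ᵥ y = (v ⬝ᵥ y) • u := by
  ext j
  simp only [Matrix.mulVec, Matrix.vecMulVec_apply, dotProduct, Pi.smul_apply,
    smul_eq_mul, Finset.sum_mul]
  exact Finset.sum_congr rfl fun k _ => by ring

lemma aux_det_smul_one_add_vecMulVec {m : Type*} [Fintype m] [DecidableEq m]
    (hc : 1 ≤ Fintype.card m) {μ : ℂ} (hμ : μ ≠ 0) (u v : m → ℂ) :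
    Matrix.det (μ • (1 : Matrix m m ℂ) + Matrix.vecMulVec u v)
      = μ ^ (Fintype.card m - 1) * (μ + v ⬝ᵥ u) := by
  have h1 : μ • ((1 : Matrix m m ℂ) + Matrix.vecMulVec (μ⁻¹ • u) v)
      = μ • 1 + Matrix.vecMulVec u v := by
    rw [smul_add, aux_vecMulVec_smul_left, smul_smul, mul_inv_cancel₀ hμ, one_smul]
  rw [← h1, Matrix.det_smul, Matrix.vecMulVec_eq Unit, Matrix.det_one_add_replicateCol_mul_replicateRow]
  have h2 : μ ^ Fintype.card m = μ ^ (Fintype.card m - 1) * μ := by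
    conv_lhs => rw [← Nat.sub_add_cancel hc]
    rw [pow_succ]
  rw [h2, dotProduct_smul]
  field_simp
  rw [smul_eq_mul, mul_add, mul_one, ← mul_assoc, mul_one_div_cancel hμ, one_mul]

lemma aux_vecMulVec_herm {m : Type*} (v : m → ℂ) :
    (Matrix.vecMulVec v (star v))ᴴ = Matrix.vecMulVec v (star v) := by
  ext i j
  simp [Matrix.conjTranspose_apply, Matrix.vecMulVec_apply, mul_comm]

/-- For `x ∈ ℂ^n`, with `a = [x; conj x]`, `b = i[x; -conj x]` and
`M = ‖x‖² I + (3/2) a a* - (1/2) b b*`, the characteristic polynomial of `M` is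
`(λ - ‖x‖²)^(2n-2) λ (λ - 4‖x‖²)`, and `M` is Hermitian positive semidefinite. -/
theorem charpoly_expected_hessian_complex
    (n : ℕ) (hn : 1 ≤ n) (x : EuclideanSpace ℂ (Fin n))
    (a b : Fin n ⊕ Fin n → ℂ)
    (ha : a = Sum.elim (fun i => x i) (fun i => starRingEnd ℂ (x i)))
    (hb : b = fun j => Complex.I *
      Sum.elim (fun i => x i) (fun i => -starRingEnd ℂ (x i)) j)
    (M : Matrix (Fin n ⊕ Fin n) (Fin n ⊕ Fin n) ℂ)
    (hM : M = ((‖x‖ : ℂ) ^ 2) • (1 : Matrix (Fin n ⊕ Fin n) (Fin n ⊕ Fin n) ℂ)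
        + (3 / 2 : ℂ) • Matrix.vecMulVec a (star a)
        - (1 / 2 : ℂ) • Matrix.vecMulVec b (star b)) :
    (∀ lam : ℂ,
      Matrix.det (lam • (1 : Matrix (Fin n ⊕ Fin n) (Fin n ⊕ Fin n) ℂ) - M) =
        (lam - (‖x‖ : ℂ) ^ 2) ^ (2 * n - 2) * lam * (lam - 4 * (‖x‖ : ℂ) ^ 2)) ∧
      M.IsHermitian ∧ M.PosSemidef := by
  set c : ℂ := (‖x‖ : ℂ) ^ 2 with hc
  set s : Fin n ⊕ Fin n → ℂ :=
    Sum.elim (fun i => x i) (fun i => -starRingEnd ℂ (x i)) with hs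
  -- basic sum fact
  have hx : (∑ i : Fin n, starRingEnd ℂ (x i) * x i) = c := by
    have h := (EuclideanSpace.inner_eq_star_dotProduct x x).symm.trans
      (inner_self_eq_norm_sq_to_K (𝕜 := ℂ) x)
    simpa [dotProduct, Pi.star_apply, RCLike.star_def, mul_comm] using h
  -- b b* = s s*
  have hbb : Matrix.vecMulVec b (star b) = Matrix.vecMulVec s (star s) := by
    subst hb
    ext j k
    simp only [Matrix.vecMulVec_apply, Pi.star_apply, star_mul', Complex.star_def,
      Complex.conj_I, _root_.map_mul]
    ring_nf
    simp [Complex.I_sq]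
  have haa : star a ⬝ᵥ a = 2 * c := by
    subst ha
    rw [dotProduct, Fintype.sum_sum_type]
    simp only [Pi.star_apply, Sum.elim_inl, Sum.elim_inr, Complex.star_def, Complex.conj_conj]
    rw [show (∑ i : Fin n, x i * starRingEnd ℂ (x i))
        = ∑ i : Fin n, starRingEnd ℂ (x i) * x i from
      Finset.sum_congr rfl fun i _ => mul_comm _ _, hx]
    ring
  have hss : star s ⬝ᵥ s = 2 * c := by
    rw [hs, dotProduct, Fintype.sum_sum_type]
    simp only [Pi.star_apply, Sum.elim_inl, Sum.elim_inr, Complex.star_def, map_neg,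
      Complex.conj_conj, neg_mul, mul_neg, neg_neg]
    rw [show (∑ i : Fin n, x i * starRingEnd ℂ (x i))
        = ∑ i : Fin n, starRingEnd ℂ (x i) * x i from
      Finset.sum_congr rfl fun i _ => mul_comm _ _, hx]
    ring
  have has : star a ⬝ᵥ s = 0 := by
    rw [ha, hs, dotProduct, Fintype.sum_sum_type]
    simp only [Pi.star_apply, Sum.elim_inl, Sum.elim_inr, Complex.star_def,
      Complex.conj_conj, mul_neg]
    rw [show (∑ i : Fin n, -(x i * starRingEnd ℂ (x i)))
        = -∑ i : Fin n, starRingEnd ℂ (x i) * x i from by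
      rw [← Finset.sum_neg_distrib]
      exact Finset.sum_congr rfl fun i _ => by ring]
    ring
  have hN : Fintype.card (Fin n ⊕ Fin n) = 2 * n := by
    simp [two_mul]
  have hcard : 1 ≤ Fintype.card (Fin n ⊕ Fin n) := by omega
  -- Hermitian
  have hherm : M.IsHermitian := by
    have hstarc : star c = c := by
      rw [hc]; simp [Complex.star_def]
    rw [Matrix.IsHermitian, hM, hbb]
    rw [Matrix.conjTranspose_sub, Matrix.conjTranspose_add, Matrix.conjTranspose_smul,
      Matrix.conjTranspose_smul, Matrix.conjTranspose_smul, Matrix.conjTranspose_one,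
      aux_vecMulVec_herm, aux_vecMulVec_herm, hstarc]
    norm_num
  -- determinant identity away from c
  have key2 : ∀ lam : ℂ, lam ≠ c →
      Matrix.det (lam • (1 : Matrix (Fin n ⊕ Fin n) (Fin n ⊕ Fin n) ℂ) - M) =
        (lam - c) ^ (2 * n - 2) * lam * (lam - 4 * c) := by
    intro lam hlam
    have hmu : lam - c ≠ 0 := sub_ne_zero.mpr hlam
    set AA := Matrix.vecMulVec a (star a) with hAA
    set SS := Matrix.vecMulVec s (star s) with hSS
    have hASz : AA * SS = 0 := by
      rw [hAA, hSS, aux_vecMulVec_mul, has, zero_smul]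
    have key : ((lam - c) • 1 - (3/2 : ℂ) • AA) * ((lam - c) • 1 + (1/2 : ℂ) • SS)
        = (lam - c) • (lam • (1 : Matrix (Fin n ⊕ Fin n) (Fin n ⊕ Fin n) ℂ) - M) := by
      rw [hM, hbb]
      simp only [Matrix.sub_mul, Matrix.mul_add, Matrix.smul_mul, Matrix.mul_smul,
        Matrix.one_mul, Matrix.mul_one, hASz, smul_zero]
      module
    have detA : Matrix.det ((lam - c) • 1 - (3/2 : ℂ) • AA)
        = (lam - c) ^ (2 * n - 1) * (lam - 4 * c) := by
      have h1 : (lam - c) • (1 : Matrix (Fin n ⊕ Fin n) (Fin n ⊕ Fin n) ℂ) - (3/2 : ℂ) • AA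
          = (lam - c) • 1 + Matrix.vecMulVec ((-(3/2) : ℂ) • a) (star a) := by
        rw [aux_vecMulVec_smul_left, hAA, sub_eq_add_neg, ← neg_smul]
      rw [h1, aux_det_smul_one_add_vecMulVec hcard hmu, hN, dotProduct_smul, haa]
      congr 1
      simp only [smul_eq_mul]
      ring
    have detB : Matrix.det ((lam - c) • 1 + (1/2 : ℂ) • SS)
        = (lam - c) ^ (2 * n - 1) * lam := by
      have h1 : (lam - c) • (1 : Matrix (Fin n ⊕ Fin n) (Fin n ⊕ Fin n) ℂ) + (1/2 : ℂ) • SS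
          = (lam - c) • 1 + Matrix.vecMulVec (((1:ℂ)/2) • s) (star s) := by
        rw [aux_vecMulVec_smul_left, hSS]
      rw [h1, aux_det_smul_one_add_vecMulVec hcard hmu, hN, dotProduct_smul, hss]
      congr 1
      simp only [smul_eq_mul]
      ring
    have main : (lam - c) ^ (2 * n) *
        Matrix.det (lam • (1 : Matrix (Fin n ⊕ Fin n) (Fin n ⊕ Fin n) ℂ) - M)
        = ((lam - c) ^ (2 * n - 1) * (lam - 4 * c)) * ((lam - c) ^ (2 * n - 1) * lam) := by
      rw [← detA, ← detB, ← Matrix.det_mul, key, Matrix.det_smul, hN]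
    apply mul_left_cancel₀ (pow_ne_zero (2 * n) hmu)
    rw [main]
    calc ((lam - c) ^ (2 * n - 1) * (lam - 4 * c)) * ((lam - c) ^ (2 * n - 1) * lam)
        = (lam - c) ^ ((2 * n - 1) + (2 * n - 1)) * ((lam - 4 * c) * lam) := by
          rw [pow_add]; ring
      _ = (lam - c) ^ (2 * n + (2 * n - 2)) * ((lam - 4 * c) * lam) := by
          rw [show (2 * n - 1) + (2 * n - 1) = 2 * n + (2 * n - 2) from by omega]
      _ = (lam - c) ^ (2 * n) * ((lam - c) ^ (2 * n - 2) * lam * (lam - 4 * c)) := by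
          rw [pow_add]; ring
  -- determinant identity everywhere, by continuity
  have hdet_all : ∀ lam : ℂ,
      Matrix.det (lam • (1 : Matrix (Fin n ⊕ Fin n) (Fin n ⊕ Fin n) ℂ) - M) =
        (lam - c) ^ (2 * n - 2) * lam * (lam - 4 * c) := by
    have hcont1 : Continuous fun lam : ℂ =>
        Matrix.det (lam • (1 : Matrix (Fin n ⊕ Fin n) (Fin n ⊕ Fin n) ℂ) - M) :=
      Continuous.matrix_det ((continuous_id.smul continuous_const).sub continuous_const)
    have hcont2 : Continuous fun lam : ℂ =>
        (lam - c) ^ (2 * n - 2) * lam * (lam - 4 * c) := by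
      fun_prop
    have heq := Continuous.ext_on (dense_compl_singleton c) hcont1 hcont2
      (fun lam hlam => key2 lam (Set.mem_compl_singleton_iff.mp hlam))
    exact fun lam => congrFun heq lam
  -- positive semidefiniteness
  have hpsd : M.PosSemidef := by
    refine Matrix.PosSemidef.of_dotProduct_mulVec_nonneg hherm fun y => ?_
    have hMv : M *ᵥ y = c • y + (3/2 : ℂ) • ((star a ⬝ᵥ y) • a)
        - (1/2 : ℂ) • ((star s ⬝ᵥ y) • s) := by
      rw [hM, hbb, Matrix.sub_mulVec, Matrix.add_mulVec, Matrix.smul_mulVec,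
        Matrix.smul_mulVec, Matrix.smul_mulVec, Matrix.one_mulVec,
        aux_vecMulVec_mulVec, aux_vecMulVec_mulVec]
    have hquad : star y ⬝ᵥ (M *ᵥ y)
        = c * (star y ⬝ᵥ y) + (3/2 : ℂ) * (star (star a ⬝ᵥ y) * (star a ⬝ᵥ y))
          - (1/2 : ℂ) * (star (star s ⬝ᵥ y) * (star s ⬝ᵥ y)) := by
      rw [hMv, dotProduct_sub, dotProduct_add]
      simp only [dotProduct_smul, smul_eq_mul]
      rw [Matrix.star_dotProduct y a, Matrix.star_dotProduct y s]
      ring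
    set Y : EuclideanSpace ℂ (Fin n ⊕ Fin n) := (WithLp.equiv 2 _).symm y with hY
    set S : EuclideanSpace ℂ (Fin n ⊕ Fin n) := (WithLp.equiv 2 _).symm s with hSdef
    have hq : star y ⬝ᵥ y = ((‖Y‖ : ℂ)) ^ 2 :=
      (dotProduct_comm _ _).trans ((EuclideanSpace.inner_toLp_toLp (𝕜 := ℂ) y y).symm.trans
        (inner_self_eq_norm_sq_to_K Y))
    have hS2 : ((‖S‖ : ℂ)) ^ 2 = 2 * c :=
      (((dotProduct_comm _ _).trans (EuclideanSpace.inner_toLp_toLp (𝕜 := ℂ) s s).symm).trans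
        (inner_self_eq_norm_sq_to_K S)).symm.trans hss
    have hS2r : ‖S‖ ^ 2 = 2 * ‖x‖ ^ 2 := by
      have := hS2
      rw [hc] at this
      exact_mod_cast this
    have hCS : ‖star s ⬝ᵥ y‖ ≤ ‖S‖ * ‖Y‖ := by
      have h := norm_inner_le_norm (𝕜 := ℂ) S Y
      rwa [show inner ℂ S Y = star s ⬝ᵥ y from
        (EuclideanSpace.inner_toLp_toLp s y).trans (dotProduct_comm _ _)] at h
    have hsm : ∀ z : ℂ, star z * z = ((‖z‖ ^ 2 : ℝ) : ℂ) := by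
      intro z
      rw [Complex.star_def, mul_comm, Complex.mul_conj]
      norm_cast
      simp [Complex.normSq_eq_norm_sq]
    rw [hquad, hq, hsm, hsm]
    have hcast : c * ((‖Y‖ : ℂ)) ^ 2 + (3/2 : ℂ) * ((‖star a ⬝ᵥ y‖ ^ 2 : ℝ) : ℂ)
          - (1/2 : ℂ) * ((‖star s ⬝ᵥ y‖ ^ 2 : ℝ) : ℂ)
        = (((‖x‖ ^ 2 * ‖Y‖ ^ 2 + 3/2 * ‖star a ⬝ᵥ y‖ ^ 2
            - 1/2 * ‖star s ⬝ᵥ y‖ ^ 2 : ℝ)) : ℂ) := by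
      rw [hc]
      push_cast
      ring
    rw [hcast]
    rw [Complex.zero_le_real]
    have h1 : ‖star s ⬝ᵥ y‖ ^ 2 ≤ (‖S‖ * ‖Y‖) ^ 2 :=
      pow_le_pow_left₀ (norm_nonneg _) hCS 2
    nlinarith [sq_nonneg ‖star a ⬝ᵥ y‖, sq_nonneg ‖Y‖, sq_nonneg ‖x‖]
  refine ⟨fun lam => hdet_all lam, hherm, hpsd⟩
end

section
/- Let $n \ge 2$, let $x \in \mathbb{R}^n$, and let $w \in \mathbb{R}^n$ with $\|w\| = 1$. Then the characteristic polynomial of the real symmetric matrix $M = (x^T w) I_n + x w^T + w x^T$ satisfies $\det(\lambda I_n - M) = (\lambda - x^T w)^{n-2}\big((\lambda - 2 x^T w)^2 - \|x\|^2\big)$ for all $\lambda$; in particular the eigenvalues of $M$ are $x^T w$ (with multiplicity $n-2$) and $2 x^T w \pm \|x\|$, and consequently $M + 3\|x\| I_n$ is positive semidefinite. -/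
open Matrix Polynomial

private lemma quad_form_nonneg'' (n : ℕ) (x w : EuclideanSpace ℝ (Fin n)) (hw : ‖w‖ = 1)
    (M : Matrix (Fin n) (Fin n) ℝ) (c : ℝ) (hcdef : c = (inner ℝ x w : ℝ))
    (hM : M = c • (1 : Matrix (Fin n) (Fin n) ℝ)
        + Matrix.vecMulVec (fun i => x i) (fun j => w j)
        + Matrix.vecMulVec (fun i => w i) (fun j => x j))
    (v : Fin n → ℝ) :
    0 ≤ dotProduct (star v) ((M + (3 * ‖x‖) • (1 : Matrix (Fin n) (Fin n) ℝ)) *ᵥ v) := by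
  have hsv : star v = v := by simp
  have hvmv : ∀ u z : Fin n → ℝ,
      Matrix.vecMulVec u z *ᵥ v = (∑ j, z j * v j) • u := by
    intro u z
    ext i
    simp only [Matrix.mulVec, dotProduct, Matrix.vecMulVec_apply, Pi.smul_apply,
      smul_eq_mul, Finset.sum_mul]
    exact Finset.sum_congr rfl fun j _ => by ring
  set a : ℝ := ∑ i, x i * v i with ha
  set b : ℝ := ∑ i, w i * v i with hb
  set s2 : ℝ := ∑ i, v i * v i with hs2
  have expand : dotProduct (star v) ((M + (3 * ‖x‖) • (1 : Matrix (Fin n) (Fin n) ℝ)) *ᵥ v)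
      = c * s2 + b * a + a * b + 3 * ‖x‖ * s2 := by
    rw [hsv, hM]
    simp only [Matrix.add_mulVec, Matrix.smul_mulVec, Matrix.one_mulVec, hvmv,
      dotProduct_add, dotProduct_smul, smul_eq_mul]
    have hvv : dotProduct v v = s2 := rfl
    have hvx : dotProduct v (fun i => x i) = a := by
      simp only [dotProduct, ha]; exact Finset.sum_congr rfl fun j _ => mul_comm _ _
    have hvw : dotProduct v (fun i => w i) = b := by
      simp only [dotProduct, hb]; exact Finset.sum_congr rfl fun j _ => mul_comm _ _
    rw [hvv, hvx, hvw]
  rw [expand]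
  set v' : EuclideanSpace ℝ (Fin n) := WithLp.toLp 2 v with hv'
  have hiav : (inner ℝ x v' : ℝ) = a := by
    simp [PiLp.inner_apply, RCLike.inner_apply, conj_trivial, ha, hv']; exact Finset.sum_congr rfl fun _ _ => mul_comm _ _
  have hibv : (inner ℝ w v' : ℝ) = b := by
    simp [PiLp.inner_apply, RCLike.inner_apply, conj_trivial, hb, hv']; exact Finset.sum_congr rfl fun _ _ => mul_comm _ _
  have hivv : (inner ℝ v' v' : ℝ) = s2 := by
    simp only [PiLp.inner_apply, RCLike.inner_apply, conj_trivial, hs2, hv']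
  have hs2n : s2 = ‖v'‖ ^ 2 := by rw [← hivv]; exact real_inner_self_eq_norm_sq v'
  have haa : |a| ≤ ‖x‖ * ‖v'‖ := by rw [← hiav]; exact abs_real_inner_le_norm x v'
  have hbb : |b| ≤ ‖v'‖ := by
    rw [← hibv]
    calc |(inner ℝ w v' : ℝ)| ≤ ‖w‖ * ‖v'‖ := abs_real_inner_le_norm w v'
    _ = ‖v'‖ := by rw [hw, one_mul]
  have hcc : |c| ≤ ‖x‖ := by
    rw [hcdef]
    calc |(inner ℝ x w : ℝ)| ≤ ‖x‖ * ‖w‖ := abs_real_inner_le_norm x w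
    _ = ‖x‖ := by rw [hw, mul_one]
  have hN : (0:ℝ) ≤ ‖v'‖ := norm_nonneg _
  have hX : (0:ℝ) ≤ ‖x‖ := norm_nonneg _
  have h1 : |a| * |b| ≤ ‖x‖ * ‖v'‖ * ‖v'‖ :=
    mul_le_mul haa hbb (abs_nonneg _) (by positivity)
  have h2 : -(|a| * |b|) ≤ a * b := by rw [← abs_mul]; exact neg_abs_le _
  have h3 : -‖x‖ ≤ c := neg_le_of_abs_le hcc
  have h4 : 0 ≤ (c + ‖x‖) * s2 := by
    apply mul_nonneg (by linarith)
    rw [hs2n]; positivity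
  nlinarith [h1, h2, h4, hs2n, hN, hX]


private lemma eval_charpoly'' {n : ℕ} (M : Matrix (Fin n) (Fin n) ℝ) (r : ℝ) :
    (M.charpoly).eval r = (r • (1 : Matrix (Fin n) (Fin n) ℝ) - M).det := by
  rw [Matrix.charpoly, ← Polynomial.coe_evalRingHom, RingHom.map_det]
  congr 1
  ext i j
  by_cases h : i = j <;>
    simp [h, Matrix.charmatrix_apply, Matrix.one_apply, Matrix.diagonal_apply]

/-- For `n ≥ 2`, `x ∈ ℝ^n` and a unit vector `w ∈ ℝ^n`, the
characteristic polynomial of `M = (xᵀw) I + x wᵀ + w xᵀ` is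
`(λ - xᵀw)^(n-2) ((λ - 2 xᵀw)² - ‖x‖²)`; consequently `M + 3‖x‖ I` is positive
semidefinite. -/
theorem charpoly_rank_two_perturbation
    (n : ℕ) (hn : 2 ≤ n) (x w : EuclideanSpace ℝ (Fin n)) (hw : ‖w‖ = 1)
    (M : Matrix (Fin n) (Fin n) ℝ)
    (hM : M = (inner ℝ x w : ℝ) • (1 : Matrix (Fin n) (Fin n) ℝ)
        + Matrix.vecMulVec (fun i => x i) (fun j => w j)
        + Matrix.vecMulVec (fun i => w i) (fun j => x j)) :
    (∀ lam : ℝ,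
      Matrix.det (lam • (1 : Matrix (Fin n) (Fin n) ℝ) - M) =
        (lam - (inner ℝ x w : ℝ)) ^ (n - 2) *
          ((lam - 2 * (inner ℝ x w : ℝ)) ^ 2 - ‖x‖ ^ 2)) ∧
      (M + (3 * ‖x‖) • (1 : Matrix (Fin n) (Fin n) ℝ)).PosSemidef := by
  set c : ℝ := (inner ℝ x w : ℝ) with hcdef
  have hxw : ∑ i, x i * w i = c := by
    rw [hcdef]; simp [PiLp.inner_apply, RCLike.inner_apply, conj_trivial]; exact Finset.sum_congr rfl fun _ _ => mul_comm _ _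
  have hwx : ∑ i, w i * x i = c := by
    rw [← hxw]; exact Finset.sum_congr rfl fun i _ => mul_comm _ _
  have hww : ∑ i, w i * w i = 1 := by
    have : (inner ℝ w w : ℝ) = ‖w‖ ^ 2 := real_inner_self_eq_norm_sq w
    simp only [PiLp.inner_apply, RCLike.inner_apply, conj_trivial, hw] at this
    simpa [hw] using this
  have hxx : ∑ i, x i * x i = ‖x‖ ^ 2 := by
    have : (inner ℝ x x : ℝ) = ‖x‖ ^ 2 := real_inner_self_eq_norm_sq x
    simpa only [PiLp.inner_apply, RCLike.inner_apply, conj_trivial] using this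
  set A : Matrix (Fin n) (Fin 2) ℝ := Matrix.of (fun i j => if j = 0 then x i else w i) with hA
  set B : Matrix (Fin 2) (Fin n) ℝ := Matrix.of (fun j i => if j = 0 then w i else x i) with hB
  have hAB : Matrix.vecMulVec (fun i => x i) (fun j => w j)
      + Matrix.vecMulVec (fun i => w i) (fun j => x j) = A * B := by
    ext i j
    simp [Matrix.mul_apply, Fin.sum_univ_two, hA, hB, Matrix.vecMulVec_apply]
  have hBA : B * A = Matrix.of !![c, 1; ‖x‖ ^ 2, c] := by
    ext i j
    fin_cases i <;> fin_cases j <;>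
      simp [Matrix.mul_apply, Matrix.of_apply, hA, hB, hxw, hwx, hww, hxx] <;> rfl
  have key : ∀ lam : ℝ, lam ≠ c →
      Matrix.det (lam • (1 : Matrix (Fin n) (Fin n) ℝ) - M) =
        (lam - c) ^ (n - 2) * ((lam - 2 * c) ^ 2 - ‖x‖ ^ 2) := by
    intro lam hlam
    have ht : lam - c ≠ 0 := sub_ne_zero.2 hlam
    set t : ℝ := lam - c with htdef
    have hscal : t * -t⁻¹ = -1 := by field_simp
    have h2 : lam • (1 : Matrix (Fin n) (Fin n) ℝ) - M
        = t • (1 + ((-t⁻¹) • A) * B) := by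
      rw [hM, add_assoc, hAB, Matrix.smul_mul, smul_add, smul_smul, hscal, neg_one_smul,
        ← sub_eq_add_neg]
      rw [htdef, sub_smul]
      abel
    rw [h2, Matrix.det_smul, Matrix.det_one_add_mul_comm, Matrix.mul_smul, hBA,
      Fintype.card_fin]
    have hdet2 : Matrix.det (1 + (-t⁻¹) • Matrix.of !![c, 1; ‖x‖ ^ 2, c])
        = (1 + -t⁻¹ * c) ^ 2 - t⁻¹ * (t⁻¹ * ‖x‖ ^ 2) := by
      rw [Matrix.det_fin_two]
      simp [Matrix.one_apply, Matrix.of_apply]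
      have e : ∀ i j, Matrix.of !![c, 1; ‖x‖ ^ 2, c] i j = !![c, 1; ‖x‖ ^ 2, c] i j := fun _ _ => rfl
      simp only [e]
      simp
      ring
    rw [hdet2]
    have hpow : t ^ n = t ^ (n - 2) * t ^ 2 := by
      rw [← pow_add, Nat.sub_add_cancel hn]
    have hlc : lam - 2 * c = t - c := by rw [htdef]; ring
    rw [hpow, hlc]
    field_simp
    ring
  have main : ∀ lam : ℝ,
      Matrix.det (lam • (1 : Matrix (Fin n) (Fin n) ℝ) - M) =
        (lam - c) ^ (n - 2) * ((lam - 2 * c) ^ 2 - ‖x‖ ^ 2) := by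
    have hpq : M.charpoly = (X - C c) ^ (n - 2) * ((X - C (2 * c)) ^ 2 - C (‖x‖ ^ 2)) := by
      rw [← sub_eq_zero]
      apply Polynomial.eq_zero_of_infinite_isRoot
      apply Set.Infinite.mono (s := {c}ᶜ)
      · intro r hr
        have hr' : r ≠ c := hr
        simp only [Set.mem_setOf_eq, IsRoot, eval_sub, eval_mul, eval_pow, eval_sub,
          eval_X, eval_C, eval_charpoly'' M r, key r hr', sub_self]
      · exact (Set.finite_singleton c).infinite_compl
    intro lam
    have := eval_charpoly'' M lam
    rw [← this, hpq]
    simp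
  refine ⟨main, Matrix.posSemidef_iff_dotProduct_mulVec.2 ⟨?_, ?_⟩⟩
  · -- Hermitian
    ext i j
    by_cases h : i = j
    · subst h; simp [hM, Matrix.conjTranspose_apply, Matrix.vecMulVec_apply]
    · simp [hM, Matrix.conjTranspose_apply, Matrix.vecMulVec_apply,
        Matrix.one_apply_ne h, Matrix.one_apply_ne (Ne.symm h)]
      ring
  · intro v
    exact quad_form_nonneg'' n x w hw M c hcdef hM v
end

section
/- Let $x, z \in \mathbb{R}^n$ with $\|z - x\| \le \|x\|/12$. Then the real symmetric matrix $(2\|z\|^2 - \|x\|^2) I_n + 4\, z z^T - x x^T$ is positive semidefinite. (Equivalently: the expectation of the real phase-retrieval least-squares objective is convex on the ball of radius $\|x\|/12$ around the solution $x$.) -/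
open Matrix Finset

lemma scalar_key (A B V H P Q t : ℝ)
    (hA : 0 ≤ A) (hV : 0 ≤ V)
    (h1 : (Q - P) ^ 2 ≤ H * V) (h2 : t ^ 2 ≤ A * B)
    (h3 : H = A + B - 2 * t) (h4 : 144 * H ≤ A) :
    0 ≤ (2 * B - A) * V + 4 * P ^ 2 - Q ^ 2 := by
  have ht : (t - A) ^ 2 ≤ A * H := by nlinarith
  have ht2 : (t - A) ^ 2 ≤ (A / 12) ^ 2 := by nlinarith
  have ht3 : A - t ≤ A / 12 := by nlinarith [sq_nonneg (t - A + A / 12)]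
  have h5 : 0 ≤ 4 * t - 3 * A := by linarith
  nlinarith [mul_nonneg h5 hV, sq_nonneg (Q - 2 * P)]

/-- For `x, z ∈ ℝ^n` with `‖z - x‖ ≤ ‖x‖/12`, the matrix
`(2‖z‖² - ‖x‖²) I + 4 z zᵀ - x xᵀ` (the expected Hessian of the real phase-retrieval
least-squares objective) is positive semidefinite. -/
theorem expected_hessian_posSemidef_near_solution
    (n : ℕ) (x z : EuclideanSpace ℝ (Fin n)) (hz : ‖z - x‖ ≤ ‖x‖ / 12) :
    ((2 * ‖z‖ ^ 2 - ‖x‖ ^ 2) • (1 : Matrix (Fin n) (Fin n) ℝ)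
        + (4 : ℝ) • Matrix.vecMulVec (fun i => z i) (fun j => z j)
        - Matrix.vecMulVec (fun i => x i) (fun j => x j)).PosSemidef := by
  rw [posSemidef_iff_dotProduct_mulVec]
  constructor
  · ext i j
    simp only [Matrix.IsHermitian, conjTranspose_apply, Matrix.sub_apply, Matrix.add_apply,
      Matrix.smul_apply, Matrix.vecMulVec_apply, Matrix.one_apply, star_trivial, smul_eq_mul]
    by_cases h : i = j <;> simp [h, eq_comm] <;> ring
  · intro v
    set w : EuclideanSpace ℝ (Fin n) := (WithLp.equiv 2 _).symm v with hw
    have hwv : ∀ i, w i = v i := fun i => rfl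
    have hip : ∀ (a b : EuclideanSpace ℝ (Fin n)), inner ℝ a b = ∑ i, a i * b i := by
      intro a b
      simp [PiLp.inner_apply, RCLike.inner_apply, mul_comm]
    set C : ℝ := 2 * ‖z‖ ^ 2 - ‖x‖ ^ 2 with hC
    set P : ℝ := ∑ i, z i * v i with hP
    set Q : ℝ := ∑ i, x i * v i with hQ
    have hmv : ∀ a, ((C • (1 : Matrix (Fin n) (Fin n) ℝ)
        + (4 : ℝ) • Matrix.vecMulVec (fun i => z i) (fun j => z j)
        - Matrix.vecMulVec (fun i => x i) (fun j => x j)) *ᵥ v) a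
        = C * v a + 4 * P * z a - Q * x a := by
      intro a
      have e1 : (4:ℝ) * P * z a = ∑ i, 4 * (z a * z i) * v i := by
        rw [hP, Finset.mul_sum, Finset.sum_mul]
        exact Finset.sum_congr rfl fun i _ => by ring
      have e2 : Q * x a = ∑ i, x a * x i * v i := by
        rw [hQ, Finset.sum_mul]
        exact Finset.sum_congr rfl fun i _ => by ring
      simp only [Matrix.mulVec, dotProduct, Matrix.sub_apply, Matrix.add_apply,
        Matrix.smul_apply, Matrix.vecMulVec_apply, Matrix.one_apply, smul_eq_mul,
        add_mul, sub_mul, mul_ite, ite_mul, zero_mul, mul_zero, mul_one,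
        Finset.sum_add_distrib, Finset.sum_sub_distrib,
        Finset.sum_ite_eq, Finset.mem_univ, if_true, e1, e2]
    have hQF : (star v) ⬝ᵥ ((C • (1 : Matrix (Fin n) (Fin n) ℝ)
        + (4 : ℝ) • Matrix.vecMulVec (fun i => z i) (fun j => z j)
        - Matrix.vecMulVec (fun i => x i) (fun j => x j)) *ᵥ v)
        = C * (∑ i, v i * v i) + 4 * P ^ 2 - Q ^ 2 := by
      calc (star v) ⬝ᵥ _ = ∑ a, v a * (C * v a + 4 * P * z a - Q * x a) :=
            Finset.sum_congr rfl fun a _ => by rw [star_trivial, hmv]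
        _ = ∑ a, (C * (v a * v a) + 4 * P * (z a * v a) - Q * (x a * v a)) :=
            Finset.sum_congr rfl fun a _ => by ring
        _ = C * (∑ a, v a * v a) + 4 * P * (∑ a, z a * v a) - Q * (∑ a, x a * v a) := by
            rw [Finset.sum_sub_distrib, Finset.sum_add_distrib, ← Finset.mul_sum,
              ← Finset.mul_sum, ← Finset.mul_sum]
        _ = C * (∑ i, v i * v i) + 4 * P ^ 2 - Q ^ 2 := by rw [← hP, ← hQ]; ring
    rw [hQF, hC, hP, hQ]
    have key := scalar_key (‖x‖ ^ 2) (‖z‖ ^ 2) (∑ i, v i * v i) (‖z - x‖ ^ 2)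
      (∑ i, z i * v i) (∑ i, x i * v i) (inner ℝ x z : ℝ)
      (sq_nonneg _)
      (Finset.sum_nonneg fun i _ => mul_self_nonneg _)
      (by
        have hcs := real_inner_mul_inner_self_le (x - z) w
        have e1 : (inner ℝ (x - z) w : ℝ) = (∑ i, x i * v i) - (∑ i, z i * v i) := by
          rw [hip]
          simp [hwv, sub_mul, Finset.sum_sub_distrib]
        have e2 : (inner ℝ (x - z) (x - z) : ℝ) = ‖z - x‖ ^ 2 := by
          rw [real_inner_self_eq_norm_sq, show x - z = -(z - x) by abel, norm_neg]
        have e3 : (inner ℝ w w : ℝ) = ∑ i, v i * v i := by rw [hip]; simp [hwv]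
        calc ((∑ i, x i * v i) - (∑ i, z i * v i)) ^ 2
            = (inner ℝ (x - z) w : ℝ) * (inner ℝ (x - z) w : ℝ) := by rw [e1]; ring
          _ ≤ (inner ℝ (x - z) (x - z) : ℝ) * (inner ℝ w w : ℝ) := hcs
          _ = ‖z - x‖ ^ 2 * ∑ i, v i * v i := by rw [e2, e3])
      (by
        have hcs := real_inner_mul_inner_self_le x z
        rw [real_inner_self_eq_norm_sq, real_inner_self_eq_norm_sq] at hcs
        nlinarith [hcs])
      (by
        have := @norm_sub_sq_real (EuclideanSpace ℝ (Fin n)) _ _ z x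
        rw [real_inner_comm] at this
        linarith [this])
      (by
        have h0 : (0:ℝ) ≤ ‖x‖ / 12 := le_trans (norm_nonneg _) hz
        nlinarith [hz, norm_nonneg (z - x)])
    exact key
end
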